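/- Let E and F be Kolmogorov spaces over an ordered set B, with restriction maps e and f. Under the diagonal-restriction correspondence between horizontal families (u_{st} : E_t → F_s)_{s ≤ t} (satisfying f_{s′s} ∘ u_{st} ∘ e_{tt′} = u_{s′t′} for s′ ≤ s ≤ t ≤ t′) and morphisms (u_t : E_t → F_t)_t (satisfying f_{st} ∘ u_t = u_s ∘ e_{st}), the supremum of operator norms is preserved: sup_{s ≤ t} ‖u_{st}‖ = sup_{t} ‖u_{tt}‖. In particular, bounded horizontal sections of the external Hom over the closed subdiagonal correspond isometrically to bounded morphisms: Γ^∞(Δ̄, 𝓗om(E,F)) ≅ Hom_B^b(E,F). -/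
import Mathlib


open scoped ENNReal

/-- A Kolmogorov space over an ordered set `B`: a family of real Banach spaces `(E b)`
with continuous linear restriction maps `res : E t →L E s` for `s ≤ t`, satisfying the
identity and composition laws, all of operator norm at most one. -/
structure KolmogorovSpace (B : Type*) [PartialOrder B] (E : B → Type*)
    [∀ b, NormedAddCommGroup (E b)] [∀ b, NormedSpace ℝ (E b)]
    [∀ b, CompleteSpace (E b)] where
  res : ∀ {s t : B}, s ≤ t → (E t →L[ℝ] E s)
  res_id : ∀ t : B, res (le_refl t) = ContinuousLinearMap.id ℝ (E t)
  res_comp : ∀ {u s t : B} (h₁ : u ≤ s) (h₂ : s ≤ t),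
    (res h₁).comp (res h₂) = res (h₁.trans h₂)
  res_norm : ∀ {s t : B} (h : s ≤ t) (x : E t), ‖res h x‖ ≤ ‖x‖

section

variable {B : Type*} [PartialOrder B] {E F : B → Type*}
  [∀ b, NormedAddCommGroup (E b)] [∀ b, NormedSpace ℝ (E b)] [∀ b, CompleteSpace (E b)]
  [∀ b, NormedAddCommGroup (F b)] [∀ b, NormedSpace ℝ (F b)] [∀ b, CompleteSpace (F b)]

/-- A family `(u_{st} : E_t → F_s)_{s ≤ t}` is horizontal (i.e. a horizontal section of
the external Hom over the closed subdiagonal `Δ̄ = {(s,t) : s ≤ t}`) if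
`f_{s's} ∘ u_{st} ∘ e_{tt'} = u_{s't'}` whenever `s' ≤ s ≤ t ≤ t'`. -/
def HorizontalFamily (KE : KolmogorovSpace B E) (KF : KolmogorovSpace B F)
    (U : ∀ s t : B, s ≤ t → (E t →L[ℝ] F s)) : Prop :=
  ∀ (s' s t t' : B) (h₁ : s' ≤ s) (h₂ : s ≤ t) (h₃ : t ≤ t'),
    (KF.res h₁).comp ((U s t h₂).comp (KE.res h₃)) = U s' t' ((h₁.trans h₂).trans h₃)

/-- Under the diagonal-restriction correspondence between horizontal
families `(u_{st})_{s≤t}` and morphisms `(u_t)_t`, the supremum of operator norms is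
preserved: `sup_{s ≤ t} ‖u_{st}‖ = sup_t ‖u_{tt}‖` (computed in `[0,∞]`).  In
particular, bounded horizontal sections of the external Hom over the closed subdiagonal
correspond isometrically to bounded morphisms: `Γ^∞(Δ̄, 𝓗om(E,F)) ≅ Hom_B^b(E,F)`. -/
theorem horizontal_family_sup_norm_eq_diagonal (KE : KolmogorovSpace B E)
    (KF : KolmogorovSpace B F)
    (U : ∀ s t : B, s ≤ t → (E t →L[ℝ] F s))
    (hU : HorizontalFamily KE KF U) :
    (⨆ p : {p : B × B // p.1 ≤ p.2}, ENNReal.ofReal ‖U p.1.1 p.1.2 p.2‖)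
        = (⨆ t : B, ENNReal.ofReal ‖U t t le_rfl‖) ∧
      ((∃ C : ℝ, ∀ (s t : B) (h : s ≤ t), ‖U s t h‖ ≤ C) ↔
        (∃ C : ℝ, ∀ t : B, ‖U t t le_rfl‖ ≤ C)) := by
  have key : ∀ (s t : B) (h : s ≤ t), ‖U s t h‖ ≤ ‖U t t le_rfl‖ := by
    intro s t h
    have heq := hU s t t t h le_rfl le_rfl
    refine ContinuousLinearMap.opNorm_le_bound _ (norm_nonneg _) fun x => ?_
    have hx : U s t h x = KF.res h (U t t le_rfl (KE.res le_rfl x)) := by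
      rw [← heq]; rfl
    rw [hx]
    calc ‖KF.res h (U t t le_rfl (KE.res le_rfl x))‖
        ≤ ‖U t t le_rfl (KE.res le_rfl x)‖ := KF.res_norm h _
      _ ≤ ‖U t t le_rfl‖ * ‖KE.res le_rfl x‖ := (U t t le_rfl).le_opNorm _
      _ ≤ ‖U t t le_rfl‖ * ‖x‖ := by
          exact mul_le_mul_of_nonneg_left (KE.res_norm le_rfl x) (norm_nonneg _)
  constructor
  · apply le_antisymm
    · refine iSup_le fun p => ?_
      refine le_trans ?_ (le_iSup (fun t => ENNReal.ofReal ‖U t t le_rfl‖) p.1.2)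
      exact ENNReal.ofReal_le_ofReal (key _ _ _)
    · refine iSup_le fun t => ?_
      exact le_iSup (fun p : {p : B × B // p.1 ≤ p.2} =>
        ENNReal.ofReal ‖U p.1.1 p.1.2 p.2‖) ⟨(t, t), le_rfl⟩
  · constructor
    · rintro ⟨C, hC⟩; exact ⟨C, fun t => hC t t le_rfl⟩
    · rintro ⟨C, hC⟩; exact ⟨C, fun s t h => (key s t h).trans (hC t)⟩

end
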